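/- If a behavior b : ℝ≥0 → Set P is non-Berkeley for δ > 0 and t > 0 is a transition point of b, then b is constant on the open interval (max(t−δ,0), t) and constant on the open interval (t, t+δ). In particular the left limit value b⁻(t) and right limit value b⁺(t) are well defined. -/

import Mathlib

open Set

/-- A behavior `b : ℝ≥0 → Set P` is non-Berkeley for `δ`. -/
def NonBerkeley {P : Type*} (b : ℝ → Set P) (δ : ℝ) : Prop :=
  ∀ t : ℝ, 0 ≤ t → ∃ u : ℝ, 0 ≤ u ∧ u ≤ t ∧ t ≤ u + δ ∧
    ∀ s₁ ∈ Icc u (u + δ), ∀ s₂ ∈ Icc u (u + δ), b s₁ = b s₂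

/-- `t` is a transition point of `b` on ℝ≥0. -/
def TransitionPt {P : Type*} (b : ℝ → Set P) (t : ℝ) : Prop :=
  0 ≤ t ∧ ∀ ε > 0, ∃ s₁ s₂ : ℝ, 0 ≤ s₁ ∧ 0 ≤ s₂ ∧ |s₁ - t| < ε ∧ |s₂ - t| < ε ∧ b s₁ ≠ b s₂

lemma no_cross {P : Type*} (b : ℝ → Set P) (t u δ : ℝ) (hu : u < t) (hud : t < u + δ)
    (hconst : ∀ s₁ ∈ Icc u (u + δ), ∀ s₂ ∈ Icc u (u + δ), b s₁ = b s₂)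
    (htr : TransitionPt b t) : False := by
  have hε : 0 < min (t - u) (u + δ - t) := lt_min (by linarith) (by linarith)
  obtain ⟨a₁, a₂, _, _, h1, h2, hne⟩ := htr.2 _ hε
  rw [abs_lt] at h1 h2
  have e1 : min (t - u) (u + δ - t) ≤ t - u := min_le_left _ _
  have e2 : min (t - u) (u + δ - t) ≤ u + δ - t := min_le_right _ _
  exact hne (hconst a₁ ⟨by linarith [h1.1], by linarith [h1.2]⟩
    a₂ ⟨by linarith [h2.1], by linarith [h2.2]⟩)

/-- At a transition point `t > 0` of a `δ`-non-Berkeley behavior, `b` is constant on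
`(max(t-δ,0), t)` and on `(t, t+δ)`; in particular the left-limit value `b⁻(t)` and
the right-limit value `b⁺(t)` are well defined. -/
theorem constant_around_transition {P : Type*} (b : ℝ → Set P) (δ : ℝ) (hδ : 0 < δ)
    (hb : NonBerkeley b δ) (t : ℝ) (ht : 0 < t) (htr : TransitionPt b t) :
    (∀ s₁ ∈ Ioo (max (t - δ) 0) t, ∀ s₂ ∈ Ioo (max (t - δ) 0) t, b s₁ = b s₂) ∧
    (∀ s₁ ∈ Ioo t (t + δ), ∀ s₂ ∈ Ioo t (t + δ), b s₁ = b s₂) ∧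
    (∃ L : Set P, ∀ s ∈ Ioo (max (t - δ) 0) t, b s = L) ∧
    (∃ R : Set P, ∀ s ∈ Ioo t (t + δ), b s = R) := by
  have hmax : max (t - δ) 0 < t := max_lt (by linarith) ht
  have hmax0 : (0:ℝ) ≤ max (t - δ) 0 := le_max_right _ _
  have hmaxd : t - δ ≤ max (t - δ) 0 := le_max_left _ _
  -- left constancy for ordered pairs
  have left : ∀ s₁ ∈ Ioo (max (t - δ) 0) t, ∀ s₂ ∈ Ioo (max (t - δ) 0) t,
      s₁ ≤ s₂ → b s₁ = b s₂ := by
    intro s₁ hs₁ s₂ hs₂ hle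
    obtain ⟨u, hu0, hus, hsu, hconst⟩ := hb s₂ (le_trans hmax0 hs₂.1.le)
    have hud : u + δ ≤ t := by
      by_contra h
      exact no_cross b t u δ (lt_of_le_of_lt hus hs₂.2) (lt_of_not_ge h) hconst htr
    have hu : u ≤ s₁ := by linarith [hs₁.1, hmaxd]
    exact hconst s₁ ⟨hu, by linarith⟩ s₂ ⟨hus, hsu⟩
  have right : ∀ s₁ ∈ Ioo t (t + δ), ∀ s₂ ∈ Ioo t (t + δ),
      s₁ ≤ s₂ → b s₁ = b s₂ := by
    intro s₁ hs₁ s₂ hs₂ hle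
    obtain ⟨u, hu0, hus, hsu, hconst⟩ := hb s₁ (by linarith [hs₁.1])
    have hud : t ≤ u := by
      by_contra h
      exact no_cross b t u δ (lt_of_not_ge h) (lt_of_lt_of_le hs₁.1 hsu) hconst htr
    exact hconst s₁ ⟨hus, hsu⟩ s₂ ⟨hus.trans hle, by linarith [hs₂.2]⟩
  have left' : ∀ s₁ ∈ Ioo (max (t - δ) 0) t, ∀ s₂ ∈ Ioo (max (t - δ) 0) t, b s₁ = b s₂ := by
    intro s₁ hs₁ s₂ hs₂
    rcases le_total s₁ s₂ with h | h
    · exact left s₁ hs₁ s₂ hs₂ h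
    · exact (left s₂ hs₂ s₁ hs₁ h).symm
  have right' : ∀ s₁ ∈ Ioo t (t + δ), ∀ s₂ ∈ Ioo t (t + δ), b s₁ = b s₂ := by
    intro s₁ hs₁ s₂ hs₂
    rcases le_total s₁ s₂ with h | h
    · exact right s₁ hs₁ s₂ hs₂ h
    · exact (right s₂ hs₂ s₁ hs₁ h).symm
  refine ⟨left', right', ?_, ?_⟩
  · refine ⟨b ((max (t - δ) 0 + t) / 2), fun s hs => left' s hs _ ?_⟩
    constructor <;> [linarith [hmax]; linarith [hmax]]
  · refine ⟨b (t + δ / 2), fun s hs => right' s hs _ ?_⟩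
    constructor <;> [linarith; linarith]
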